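/- With ψ_l as defined, for every F_q-linear combination f of the variables x_1,...,x_n, ψ_l(f) = (ψ_{l-1}(f))^q - ψ_{l-1}(x_l)^{q-1} · ψ_{l-1}(f). -/

import Mathlib

open MvPolynomial Finset

/-- The `F`-algebra endomorphism `ψ_l` of `F[x_1,…,x_n]` sending each variable `x_i` to
`F_{l,q}(x_i) = ∏_{u ∈ span(x_1,…,x_l)} (x_i - u)`. -/
noncomputable def psi (F : Type*) [Field F] [Fintype F] (n l : ℕ) (h : l ≤ n) :
    MvPolynomial (Fin n) F →ₐ[F] MvPolynomial (Fin n) F :=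
  MvPolynomial.aeval fun i =>
    ∏ c : Fin l → F, (MvPolynomial.X i - ∑ j, c j • MvPolynomial.X (Fin.castLE h j))

section Aux

variable {F : Type*} [Field F] [Fintype F]

lemma prod_X_sub_C_univ :
    ∏ t : F, (Polynomial.X - Polynomial.C t)
      = Polynomial.X ^ Fintype.card F - Polynomial.X := by
  classical
  have hlt : 1 < Fintype.card F := Fintype.one_lt_card
  have hmonic : (Polynomial.X ^ Fintype.card F - Polynomial.X : Polynomial F).Monic := by
    apply Polynomial.monic_X_pow_sub
    rw [Polynomial.degree_X]
    exact_mod_cast hlt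
  have hroots := FiniteField.roots_X_pow_card_sub_X F
  have hdeg := FiniteField.X_pow_card_sub_X_natDegree_eq F hlt
  have hcard : Multiset.card (Polynomial.X ^ Fintype.card F - Polynomial.X
      : Polynomial F).roots = (Polynomial.X ^ Fintype.card F - Polynomial.X
      : Polynomial F).natDegree := by
    rw [hroots, hdeg]; simp
  have key := Polynomial.prod_multiset_X_sub_C_of_monic_of_roots_card_eq hmonic hcard
  rw [hroots] at key
  rw [← key]
  rfl

lemma prod_sub_algebraMap {K : Type*} [Field K] [Algebra F K] (s : K) :
    ∏ t : F, (s - algebraMap F K t) = s ^ Fintype.card F - s := by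
  have := congrArg (Polynomial.aeval s) (prod_X_sub_C_univ (F := F))
  simpa using this

lemma prod_sub_smul_field {K : Type*} [Field K] [Algebra F K] (y z : K) :
    ∏ t : F, (y - t • z) = y ^ Fintype.card F - z ^ (Fintype.card F - 1) * y := by
  have hlt : 1 < Fintype.card F := Fintype.one_lt_card
  rcases eq_or_ne z 0 with rfl | hz
  · simp [zero_pow (by omega : Fintype.card F - 1 ≠ 0)]
  · have key : ∀ t : F, y - t • z = z * (y * z⁻¹ - algebraMap F K t) := by
      intro t; rw [Algebra.smul_def]; field_simp
    simp_rw [key]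
    rw [Finset.prod_mul_distrib, Finset.prod_const, Finset.card_univ, prod_sub_algebraMap,
      mul_sub, ← mul_pow]
    have h1 : z * (y * z⁻¹) = y := by field_simp
    have h2 : z ^ Fintype.card F * (y * z⁻¹) = z ^ (Fintype.card F - 1) * y := by
      rw [← Nat.sub_add_cancel (by omega : 1 ≤ Fintype.card F), pow_succ, Nat.add_sub_cancel]
      field_simp
    rw [h1, h2]

lemma prod_sub_smul_mv {n : ℕ} (y z : MvPolynomial (Fin n) F) :
    ∏ t : F, (y - t • z) = y ^ Fintype.card F - z ^ (Fintype.card F - 1) * y := by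
  set R := MvPolynomial (Fin n) F
  set K := FractionRing R
  have hinj : Function.Injective (algebraMap R K) := IsFractionRing.injective R K
  apply hinj
  have halg : ∀ (t : F) (w : R), algebraMap R K (t • w) = t • algebraMap R K w := by
    intro t w
    rw [Algebra.smul_def, Algebra.smul_def, map_mul, ← IsScalarTower.algebraMap_apply]
  rw [map_prod, map_sub, map_pow, map_mul, map_pow]
  simp_rw [map_sub, halg]
  exact prod_sub_smul_field _ _

end Aux

section PFun

variable {F : Type*} [Field F] [Fintype F] {n : ℕ}

/-- The subspace-product map. -/
noncomputable def Pfun (F : Type*) [Field F] [Fintype F] (n l : ℕ) (h : l ≤ n)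
    (g : MvPolynomial (Fin n) F) : MvPolynomial (Fin n) F :=
  ∏ c : Fin l → F, (g - ∑ j, c j • X (Fin.castLE h j))

lemma Pfun_succ (l : ℕ) (h : l + 1 ≤ n) (g : MvPolynomial (Fin n) F) :
    Pfun F n (l + 1) h g
      = ∏ t : F, Pfun F n l (Nat.le_of_succ_le h) (g - t • X ⟨l, h⟩) := by
  classical
  have h' : l ≤ n := Nat.le_of_succ_le h
  calc Pfun F n (l + 1) h g
      = ∏ p : F × (Fin l → F),
          (g - ∑ j, (Fin.snocEquiv (fun _ : Fin (l + 1) => F)) p j • X (Fin.castLE h j)) :=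
        (Equiv.prod_comp (Fin.snocEquiv fun _ : Fin (l + 1) => F)
          (fun c => g - ∑ j, c j • X (Fin.castLE h j))).symm
    _ = ∏ p : F × (Fin l → F),
          ((g - p.1 • X ⟨l, h⟩) - ∑ j : Fin l, p.2 j • X (Fin.castLE h' j)) := by
        apply Fintype.prod_congr
        intro p
        have hsum : ∑ j, (Fin.snocEquiv (fun _ : Fin (l + 1) => F)) p j • X (Fin.castLE h j)
            = ((∑ j : Fin l, p.2 j • X (Fin.castLE h' j)) + p.1 • X (⟨l, h⟩ : Fin n)
              : MvPolynomial (Fin n) F) := by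
          rw [Fin.sum_univ_castSucc]
          congr 1
          · apply Finset.sum_congr rfl
            intro j _
            rw [show (Fin.snocEquiv (fun _ : Fin (l + 1) => F)) p (Fin.castSucc j) = p.2 j by
              simp [Fin.snocEquiv]]
            rfl
          · rw [show (Fin.snocEquiv (fun _ : Fin (l + 1) => F)) p (Fin.last l) = p.1 by
              simp [Fin.snocEquiv]]
            rfl
        rw [hsum]
        ring
    _ = ∏ t : F, Pfun F n l h' (g - t • X ⟨l, h⟩) := by
        rw [Fintype.prod_prod_type]
        rfl

lemma Pfun_linear : ∀ (l : ℕ) (h : l ≤ n) (a b : F) (g g' : MvPolynomial (Fin n) F),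
    Pfun F n l h (a • g + b • g') = a • Pfun F n l h g + b • Pfun F n l h g' := by
  intro l
  induction l with
  | zero =>
    intro h a b g g'
    simp [Pfun]
  | succ l ih =>
    intro h a b g g'
    have h' : l ≤ n := Nat.le_of_succ_le h
    have hsub : ∀ (t : F) (w : MvPolynomial (Fin n) F),
        Pfun F n l h' (w - t • X ⟨l, h⟩)
          = Pfun F n l h' w - t • Pfun F n l h' (X ⟨l, h⟩) := by
      intro t w
      have := ih h' 1 (-t) w (X ⟨l, h⟩)
      simpa [sub_eq_add_neg] using this
    have closed : ∀ w : MvPolynomial (Fin n) F,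
        Pfun F n (l + 1) h w
          = (Pfun F n l h' w) ^ Fintype.card F
            - (Pfun F n l h' (X ⟨l, h⟩)) ^ (Fintype.card F - 1) * Pfun F n l h' w := by
      intro w
      rw [Pfun_succ l h w]
      simp_rw [hsub]
      exact prod_sub_smul_mv _ _
    rw [closed, closed, closed, ih h' a b g g']
    obtain ⟨p, hp⟩ := CharP.exists F
    haveI : CharP F p := hp
    have hpp : p.Prime := CharP.char_is_prime F p
    haveI : Fact p.Prime := ⟨hpp⟩
    obtain ⟨m, hm⟩ := FiniteField.card F p
    set Y := Pfun F n l h' g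
    set Y' := Pfun F n l h' g'
    set Z := Pfun F n l h' (X ⟨l, h⟩)
    have hfrob : (a • Y + b • Y') ^ Fintype.card F
        = a • Y ^ Fintype.card F + b • Y' ^ Fintype.card F := by
      rw [hm.2, add_pow_char_pow, smul_pow, smul_pow, ← hm.2,
        FiniteField.pow_card, FiniteField.pow_card]
    rw [hfrob]
    simp only [smul_eq_C_mul]
    ring

end PFun

theorem stmt_3 (F : Type*) [Field F] [Fintype F] (n l q : ℕ) (hq : q = Fintype.card F)
    (h : l + 1 ≤ n) (a : Fin n → F) :
    psi F n (l + 1) h (∑ i, a i • X i)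
      = (psi F n l (by omega) (∑ i, a i • X i)) ^ q
        - (psi F n l (by omega) (X ⟨l, by omega⟩)) ^ (q - 1)
          * psi F n l (by omega) (∑ i, a i • X i) := by
  subst hq
  have h' : l ≤ n := by omega
  have hpsiX : ∀ (m : ℕ) (hm : m ≤ n) (i : Fin n),
      psi F n m hm (X i) = Pfun F n m hm (X i) := by
    intro m hm i
    rw [psi, aeval_X]
    rfl
  have hP : ∀ (m : ℕ) (hm : m ≤ n),
      psi F n m hm (∑ i, a i • X i) = Pfun F n m hm (∑ i, a i • X i) := by
    intro m hm
    have hzero : Pfun F n m hm 0 = 0 := by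
      have h0 := Pfun_linear m hm (1 : F) 1 0 0
      simp only [one_smul, smul_zero, add_zero, zero_add] at h0
      exact (left_eq_add.mp h0)
    rw [map_sum]
    have hsum : ∀ s : Finset (Fin n),
        ∑ i ∈ s, psi F n m hm (a i • X i) = Pfun F n m hm (∑ i ∈ s, a i • X i) := by
      intro s
      induction s using Finset.induction with
      | empty => simpa using hzero.symm
      | insert x s hx ih =>
        rw [Finset.sum_insert hx, Finset.sum_insert hx, ih]
        have hl := Pfun_linear m hm (a x) 1 (X x) (∑ i ∈ s, a i • X i)
        rw [one_smul, one_smul] at hl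
        rw [hl, map_smul, hpsiX m hm x]
    exact hsum Finset.univ
  rw [hP (l + 1) h, hP l h', hpsiX l h' ⟨l, h⟩]
  have hsub : ∀ (t : F) (w : MvPolynomial (Fin n) F),
      Pfun F n l h' (w - t • X ⟨l, h⟩)
        = Pfun F n l h' w - t • Pfun F n l h' (X ⟨l, h⟩) := by
    intro t w
    have := Pfun_linear l h' 1 (-t) w (X ⟨l, h⟩)
    simpa [sub_eq_add_neg] using this
  rw [Pfun_succ l h]
  simp_rw [hsub]
  exact prod_sub_smul_mv _ _
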